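/- Hardy's Theorem (concrete form). Let d ≥ 3 and let ψ, φ ∈ EuclideanSpace ℂ (Fin d) be unit vectors with ⟪φ, ψ⟫ ≠ 0 and ‖⟪φ, ψ⟫‖² ≤ (d−1)/d. Let μ_ψ and μ_φ be probability measures on a measurable space (Λ, Σ). Suppose that for every family of unitary operators (U_j)_{j ∈ Fin d} on EuclideanSpace ℂ (Fin d) with U_j ψ = ψ for every j, there exist Markov kernels (γ_j)_{j ∈ Fin d} from (Λ, Σ) to itself such that: (a) (ontic indifference for ψ) for each j there is a measurable set Ω_j with μ_ψ(Ω_j) = 1 and γ_j(λ)(Ω') = δ_λ(Ω') for every λ ∈ Ω_j and every measurable Ω' ⊆ Ω_j; and (b) (reproduces the quantum preclusions) for every orthonormal basis (b_i)_{i ∈ Fin d} there exist measurable functions f_i : Λ → ℝ with f_i ≥ 0, Σ_{i ∈ Fin d} f_i(λ) = 1 for every λ, and ∫ f_i d(μ_φ bind γ_j) = 0 whenever ⟪b_i, U_j φ⟫ = 0. Then D(μ_ψ, μ_φ) = 1, i.e. ψ and φ are ontologically distinct. -/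

import Mathlib

open MeasureTheory ProbabilityTheory Finset

local notation "⟪" x ", " y "⟫" => @inner ℂ _ _ x y

lemma hardy_aux_arith {D A : ℝ} (hD : 3 ≤ D) (hA0 : 0 ≤ A) (hA : A ≤ (D - 1) / D) :
    A / ((1 - A) * D) * D / (D - 1) ≤ 1 := by
  have hD0 : (0:ℝ) < D := by linarith
  have hC0 : 0 < 1 - A := by
    have : (D - 1) / D < 1 := by rw [div_lt_one hD0]; linarith
    linarith
  have h1 : A * D ≤ D - 1 := by rw [← le_div_iff₀ hD0]; exact hA
  rw [div_le_one (by linarith)]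
  rw [div_mul_eq_mul_div, div_le_iff₀ (by positivity)]
  have h2 : A ≤ (1 - A) * (D - 1) := by nlinarith [h1]
  have h3 := mul_le_mul_of_nonneg_right h2 hD0.le
  nlinarith [h3]

section Construction

variable {d : ℕ}

set_option maxHeartbeats 1000000 in
lemma hardy_construction (hd : 3 ≤ d) (ψ φ : EuclideanSpace ℂ (Fin d))
    (hψ : ‖ψ‖ = 1) (hφ : ‖φ‖ = 1)
    (hle : ‖(inner ℂ φ ψ : ℂ)‖ ^ 2 ≤ ((d : ℝ) - 1) / d) :
    ∃ (U : Fin d → (EuclideanSpace ℂ (Fin d) ≃ₗᵢ[ℂ] EuclideanSpace ℂ (Fin d)))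
      (b : OrthonormalBasis (Fin d) ℂ (EuclideanSpace ℂ (Fin d))),
      (∀ j, U j ψ = ψ) ∧ ∀ i, ⟪b i, U i φ⟫ = 0 := by
  have hd0 : (d : ℝ) ≠ 0 := by positivity
  have hd3 : (3 : ℝ) ≤ d := by exact_mod_cast hd
  have hdC : (d : ℂ) ≠ 0 := by exact_mod_cast Nat.cast_ne_zero.2 (by omega : d ≠ 0)
  have hdC1 : (d : ℂ) - 1 ≠ 0 := by
    intro hcon
    have : (d : ℂ) = 1 := by linear_combination hcon
    have : (d : ℕ) = 1 := by exact_mod_cast this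
    omega
  -- indices
  set i0 : Fin d := ⟨0, by omega⟩ with hi0
  set i1 : Fin d := ⟨1, by omega⟩ with hi1
  set i2 : Fin d := ⟨2, by omega⟩ with hi2
  -- primitive root
  set ζ : ℂ := Complex.exp (2 * Real.pi * Complex.I / d) with hζdef
  have hζ : IsPrimitiveRoot ζ d := Complex.isPrimitiveRoot_exp d (by omega)
  have hζd : ζ ^ d = 1 := hζ.pow_eq_one
  have hζ0 : ζ ≠ 0 := Complex.exp_ne_zero _
  have hζabs : ‖ζ‖ = 1 := by
    have h1 : ‖ζ‖ ^ d = 1 := by rw [← norm_pow, hζd, norm_one]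
    rcases (pow_eq_one_iff_cases.1 h1) with h | h | h
    · omega
    · exact h
    · exfalso; nlinarith [norm_nonneg ζ, h.1]
  have hconjζ : ∀ m : ℕ, (starRingEnd ℂ) (ζ ^ m) = (ζ ^ m)⁻¹ := by
    intro m
    rw [← Complex.inv_eq_conj]
    rw [norm_pow, hζabs, one_pow]
  have hconj_mul : ∀ m : ℕ, (starRingEnd ℂ) (ζ ^ m) * ζ ^ m = 1 := by
    intro m
    rw [hconjζ m, inv_mul_cancel₀ (pow_ne_zero _ hζ0)]
  -- square root of d
  set sd : ℝ := Real.sqrt d with hsddef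
  have hsdpos : 0 < sd := Real.sqrt_pos.2 (by positivity)
  have hsd0 : (sd : ℂ) ≠ 0 := by exact_mod_cast hsdpos.ne'
  have hsdsq : (sd : ℂ) ^ 2 = d := by
    rw [← Complex.ofReal_pow, Real.sq_sqrt (by positivity)]
    norm_cast
  -- the Fourier family
  set Fv : Fin d → EuclideanSpace ℂ (Fin d) :=
    fun i => (WithLp.equiv 2 (Fin d → ℂ)).symm (fun k => ζ ^ (i.1 * k.1) * (sd : ℂ)⁻¹)
    with hFvdef
  have hFvapp : ∀ i k, Fv i k = ζ ^ (i.1 * k.1) * (sd : ℂ)⁻¹ := fun i k => rfl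
  have hFvon : Orthonormal ℂ Fv := by
    rw [orthonormal_iff_ite]
    intro i j
    have hexp : ∀ k : Fin d, ⟪Fv i k, Fv j k⟫ = ((ζ ^ j.1) / (ζ ^ i.1)) ^ k.1 * (d : ℂ)⁻¹ := by
      intro k
      rw [hFvapp, hFvapp, RCLike.inner_apply]
      rw [map_mul, hconjζ]
      have : ((starRingEnd ℂ) ((sd:ℂ)⁻¹)) = (sd:ℂ)⁻¹ := by
        rw [map_inv₀, Complex.conj_ofReal]
      rw [this]
      rw [div_pow, ← pow_mul, ← pow_mul, mul_comm j.1 k.1, mul_comm i.1 k.1]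
      field_simp [pow_ne_zero _ hζ0]
      ring_nf
      rw [hsdsq]
    have hsum : ⟪Fv i, Fv j⟫ = (∑ k ∈ Finset.range d, ((ζ ^ j.1) / (ζ ^ i.1)) ^ k) * (d : ℂ)⁻¹ := by
      rw [PiLp.inner_apply]
      rw [Finset.sum_congr rfl (fun k _ => hexp k), ← Finset.sum_mul,
        Fin.sum_univ_eq_sum_range (fun k => ((ζ ^ j.1) / (ζ ^ i.1)) ^ k)]
    by_cases hij : i = j
    · subst hij
      simp only [hsum, div_self (pow_ne_zero _ hζ0), one_pow, Finset.sum_const,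
        Finset.card_range, nsmul_eq_mul, mul_one, if_pos rfl]
      field_simp
      simp
    · rw [hsum, if_neg hij]
      have hw1 : (ζ ^ j.1) / (ζ ^ i.1) ≠ 1 := by
        intro hcon
        apply hij
        have : ζ ^ j.1 = ζ ^ i.1 := by
          field_simp at hcon
          exact hcon
        exact (Fin.ext (hζ.pow_inj j.2 i.2 this)).symm
      rw [geom_sum_eq hw1]
      have hwd : ((ζ ^ j.1) / (ζ ^ i.1)) ^ d = 1 := by
        rw [div_pow, ← pow_mul, ← pow_mul, mul_comm j.1 d, mul_comm i.1 d,
          pow_mul, pow_mul, hζd, one_pow, one_pow]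
        exact div_self one_ne_zero
      rw [hwd]
      simp
  have hcard : Module.finrank ℂ (EuclideanSpace ℂ (Fin d)) = Fintype.card (Fin d) := by
    simp [finrank_euclideanSpace_fin]
  have hne01 : i0 ≠ i1 := Fin.ne_of_val_ne (by norm_num)
  have hne10 : i1 ≠ i0 := Fin.ne_of_val_ne (by norm_num)
  have hne02 : i0 ≠ i2 := Fin.ne_of_val_ne (by norm_num)
  have hne12 : i1 ≠ i2 := Fin.ne_of_val_ne (by norm_num)
  have hψψ : ⟪ψ, ψ⟫ = 1 := by
    rw [inner_self_eq_norm_sq_to_K, hψ]; norm_num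
  -- basis e with e i0 = ψ
  obtain ⟨e, he⟩ : ∃ e : OrthonormalBasis (Fin d) ℂ (EuclideanSpace ℂ (Fin d)), e i0 = ψ := by
    have hon : Orthonormal ℂ (({i0} : Set (Fin d)).restrict (fun _ => ψ)) := by
      rw [orthonormal_iff_ite]
      rintro ⟨p, hp⟩ ⟨q, hq⟩
      simp only [Set.mem_singleton_iff] at hp hq
      subst hp; subst hq
      simp [hψψ, hψ, Set.restrict]
    obtain ⟨e, he⟩ := hon.exists_orthonormalBasis_extension_of_card_eq hcard
    exact ⟨e, he i0 rfl⟩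
  -- basis b
  obtain ⟨b, hb⟩ : ∃ b : OrthonormalBasis (Fin d) ℂ (EuclideanSpace ℂ (Fin d)),
      ∀ i, b i = e.repr.symm (Fv i) := by
    have h2 : Orthonormal ℂ (fun i => e.repr.symm (Fv i)) := by
      rw [orthonormal_iff_ite] at hFvon ⊢
      intro i j
      rw [LinearIsometryEquiv.inner_map_map]
      exact hFvon i j
    have hon : Orthonormal ℂ ((Set.univ : Set (Fin d)).restrict
        (fun i => e.repr.symm (Fv i))) := h2.comp _ Subtype.val_injective
    obtain ⟨b, hbx⟩ := hon.exists_orthonormalBasis_extension_of_card_eq hcard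
    exact ⟨b, fun i => hbx i (Set.mem_univ i)⟩
  -- scalars
  set a : ℂ := ⟪ψ, φ⟫ with hadef
  have ha2 : ‖a‖ ^ 2 ≤ ((d : ℝ) - 1) / d := by
    rw [hadef, norm_inner_symm]; exact hle
  have ha1 : ‖a‖ ^ 2 < 1 := by
    refine lt_of_le_of_lt ha2 ?_
    rw [div_lt_one (by positivity)]
    linarith
  set c : ℝ := Real.sqrt (1 - ‖a‖ ^ 2) with hcdef
  have hcpos : 0 < c := Real.sqrt_pos.2 (by linarith)
  have hc2 : c ^ 2 = 1 - ‖a‖ ^ 2 := Real.sq_sqrt (by linarith)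
  have hc0 : (c : ℂ) ≠ 0 := by exact_mod_cast hcpos.ne'
  set t : ℂ := -a / ((c : ℂ) * sd) with htdef
  have hsdsqR : sd ^ 2 = (d : ℝ) := Real.sq_sqrt (by positivity)
  have ht2 : ‖t‖ ^ 2 = ‖a‖ ^ 2 / (c ^ 2 * d) := by
    rw [htdef, norm_div, norm_neg, norm_mul, Complex.norm_real, Complex.norm_real,
      Real.norm_eq_abs, Real.norm_eq_abs, abs_of_pos hcpos, abs_of_pos hsdpos]
    rw [div_pow, mul_pow, hsdsqR]
  have htle : ‖t‖ ^ 2 * d / ((d : ℝ) - 1) ≤ 1 := by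
    rw [ht2, hc2]
    exact hardy_aux_arith hd3 (by positivity) ha2
  set α : ℂ := t * d / ((d : ℂ) - 1) with hαdef
  set β : ℝ := Real.sqrt (1 - ‖t‖ ^ 2 * d / ((d : ℝ) - 1)) with hβdef
  have hβ2 : β ^ 2 = 1 - ‖t‖ ^ 2 * d / ((d : ℝ) - 1) := Real.sq_sqrt (by linarith)
  -- vectors
  set δ0 : EuclideanSpace ℂ (Fin d) := EuclideanSpace.single i0 (1 : ℂ) with hδ0def
  set uv : Fin d → EuclideanSpace ℂ (Fin d) := fun i => Fv i - (sd : ℂ)⁻¹ • δ0 with huvdef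
  set vv : Fin d → EuclideanSpace ℂ (Fin d) := fun i =>
    (Real.sqrt 2 : ℂ)⁻¹ • (ζ ^ (i.1 * 1) • EuclideanSpace.single i1 (1 : ℂ)
      - ζ ^ (i.1 * 2) • EuclideanSpace.single i2 (1 : ℂ)) with hvvdef
  have hs2 : ((Real.sqrt 2 : ℝ) : ℂ) ^ 2 = 2 := by
    rw [← Complex.ofReal_pow, Real.sq_sqrt (by norm_num)]; norm_num
  have hs20 : ((Real.sqrt 2 : ℝ) : ℂ) ≠ 0 := by
    intro hcon; rw [hcon] at hs2; norm_num at hs2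
  have hδδ : ⟪δ0, δ0⟫ = 1 := by
    rw [hδ0def, EuclideanSpace.inner_single_left]
    simp [EuclideanSpace.single_apply]
  have hFδ : ∀ i, ⟪Fv i, δ0⟫ = (sd : ℂ)⁻¹ := by
    intro i
    rw [hδ0def, EuclideanSpace.inner_single_right, hFvapp]
    have : i.1 * i0.1 = 0 := by rw [hi0]; simp
    rw [this, pow_zero, one_mul, one_mul, map_inv₀, Complex.conj_ofReal]
  have hδF : ∀ i, ⟪δ0, Fv i⟫ = (sd : ℂ)⁻¹ := by
    intro i
    rw [hδ0def, EuclideanSpace.inner_single_left, hFvapp]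
    have : i.1 * i0.1 = 0 := by rw [hi0]; simp
    rw [this, pow_zero, one_mul, map_one, one_mul]
  have hFsingle : ∀ (i : Fin d) (j : Fin d),
      ⟪Fv i, EuclideanSpace.single j (1 : ℂ)⟫ = (starRingEnd ℂ) (ζ ^ (i.1 * j.1)) * (sd : ℂ)⁻¹ := by
    intro i j
    rw [EuclideanSpace.inner_single_right, hFvapp, one_mul, map_mul, map_inv₀,
      Complex.conj_ofReal]
  have hδsingle1 : ⟪δ0, EuclideanSpace.single i1 (1 : ℂ)⟫ = 0 := by
    rw [hδ0def, EuclideanSpace.inner_single_left]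
    simp [EuclideanSpace.single_apply, hne01]
  have hδsingle2 : ⟪δ0, EuclideanSpace.single i2 (1 : ℂ)⟫ = 0 := by
    rw [hδ0def, EuclideanSpace.inner_single_left]
    simp [EuclideanSpace.single_apply, hne02]
  have hFvv : ∀ i, ⟪Fv i, vv i⟫ = 0 := by
    intro i
    rw [hvvdef]
    simp only [inner_smul_right, inner_sub_right, hFsingle]
    have h1 := hconj_mul (i.1 * 1)
    have h2 := hconj_mul (i.1 * 2)
    linear_combination ((Real.sqrt 2 : ℝ) : ℂ)⁻¹ * (sd : ℂ)⁻¹ * (h1 - h2)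
  have hδvv : ∀ i, ⟪δ0, vv i⟫ = 0 := by
    intro i
    rw [hvvdef]
    simp only [inner_smul_right, inner_sub_right, hδsingle1, hδsingle2]
    ring
  have hFF : ∀ i, ⟪Fv i, Fv i⟫ = 1 := by
    intro i
    have := (orthonormal_iff_ite.1 hFvon) i i
    simpa using this
  have hFu : ∀ i, ⟪Fv i, uv i⟫ = 1 - (d : ℂ)⁻¹ := by
    intro i
    rw [huvdef]
    simp only [inner_sub_right, inner_smul_right, hFF, hFδ]
    rw [← hsdsq]
    field_simp
  have hδu : ∀ i, ⟪δ0, uv i⟫ = 0 := by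
    intro i
    rw [huvdef]
    simp only [inner_sub_right, inner_smul_right, hδF, hδδ]
    ring
  have huu : ∀ i, ⟪uv i, uv i⟫ = 1 - (d : ℂ)⁻¹ := by
    intro i
    rw [show uv i = Fv i - (sd : ℂ)⁻¹ • δ0 from rfl]
    rw [inner_sub_left, inner_smul_left, hFu, hδu]
    ring
  have huvv : ∀ i, ⟪uv i, vv i⟫ = 0 := by
    intro i
    rw [show uv i = Fv i - (sd : ℂ)⁻¹ • δ0 from rfl]
    rw [inner_sub_left, inner_smul_left, hFvv, hδvv]
    ring
  have hsingle11 : ⟪EuclideanSpace.single i1 (1:ℂ), EuclideanSpace.single i1 (1:ℂ)⟫ = 1 := by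
    rw [EuclideanSpace.inner_single_left]
    simp [EuclideanSpace.single_apply]
  have hsingle22 : ⟪EuclideanSpace.single i2 (1:ℂ), EuclideanSpace.single i2 (1:ℂ)⟫ = 1 := by
    rw [EuclideanSpace.inner_single_left]
    simp [EuclideanSpace.single_apply]
  have hsingle12 : ⟪EuclideanSpace.single i1 (1:ℂ), EuclideanSpace.single i2 (1:ℂ)⟫ = 0 := by
    rw [EuclideanSpace.inner_single_left]
    simp [EuclideanSpace.single_apply, hne12]
  have hsingle21 : ⟪EuclideanSpace.single i2 (1:ℂ), EuclideanSpace.single i1 (1:ℂ)⟫ = 0 := by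
    rw [EuclideanSpace.inner_single_left]
    simp [EuclideanSpace.single_apply, hne12.symm]
  have hvvvv : ∀ i, ⟪vv i, vv i⟫ = 1 := by
    intro i
    rw [show vv i = (Real.sqrt 2 : ℂ)⁻¹ • (ζ ^ (i.1 * 1) • EuclideanSpace.single i1 (1 : ℂ)
      - ζ ^ (i.1 * 2) • EuclideanSpace.single i2 (1 : ℂ)) from rfl]
    simp only [inner_smul_left, inner_smul_right, inner_sub_left, inner_sub_right,
      hsingle11, hsingle22, hsingle12, hsingle21, map_inv₀, Complex.conj_ofReal]
    have h1 := hconj_mul (i.1 * 1)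
    have h2 := hconj_mul (i.1 * 2)
    have e1 : ((Real.sqrt 2 : ℝ) : ℂ)⁻¹ * ((Real.sqrt 2 : ℝ) : ℂ)⁻¹ * 2 = 1 := by
      rw [← mul_inv,
        show ((Real.sqrt 2 : ℝ):ℂ) * ((Real.sqrt 2 : ℝ):ℂ) = 2 by rw [← sq]; exact hs2]
      norm_num
    linear_combination (((Real.sqrt 2 : ℝ) : ℂ)⁻¹ * ((Real.sqrt 2 : ℝ) : ℂ)⁻¹) * h1
      + (((Real.sqrt 2 : ℝ) : ℂ)⁻¹ * ((Real.sqrt 2 : ℝ) : ℂ)⁻¹) * h2 + e1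
  have hvu : ∀ i, ⟪vv i, uv i⟫ = 0 := by
    intro i
    rw [← inner_conj_symm, huvv i, map_zero]
  have hconj_norm : ∀ z : ℂ, (starRingEnd ℂ) z * z = ((‖z‖ ^ 2 : ℝ) : ℂ) := by
    intro z
    rw [mul_comm, Complex.mul_conj, Complex.normSq_eq_norm_sq]
  set qv : Fin d → EuclideanSpace ℂ (Fin d) := fun i => α • uv i + (β : ℂ) • vv i with hqvdef
  have hδq : ∀ i, ⟪δ0, qv i⟫ = 0 := by
    intro i
    rw [show qv i = α • uv i + (β : ℂ) • vv i from rfl]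
    rw [inner_add_right, inner_smul_right, inner_smul_right, hδu, hδvv]
    ring
  have hFq : ∀ i, ⟪Fv i, qv i⟫ = t := by
    intro i
    rw [show qv i = α • uv i + (β : ℂ) • vv i from rfl]
    rw [inner_add_right, inner_smul_right, inner_smul_right, hFu, hFvv, hαdef]
    field_simp
    ring
  have hconjα : (starRingEnd ℂ) α = (starRingEnd ℂ) t * d / ((d : ℂ) - 1) := by
    rw [hαdef, map_div₀, map_mul, map_natCast, map_sub, map_natCast, map_one]
  have hββ : ((β : ℝ) : ℂ) * β = 1 - ((‖t‖ ^ 2 : ℝ) : ℂ) * d / ((d : ℂ) - 1) := by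
    rw [← Complex.ofReal_mul, ← sq, hβ2]
    push_cast
    ring
  have hqq : ∀ i, ⟪qv i, qv i⟫ = 1 := by
    intro i
    rw [show qv i = α • uv i + (β : ℂ) • vv i from rfl]
    simp only [inner_add_left, inner_add_right, inner_smul_left, inner_smul_right,
      huu, huvv, hvu, hvvvv, mul_zero, zero_mul, add_zero, zero_add, mul_one,
      Complex.conj_ofReal]
    have hq1 : (starRingEnd ℂ) α * (α * (1 - (d : ℂ)⁻¹))
        = ((‖t‖ ^ 2 : ℝ) : ℂ) * d / ((d : ℂ) - 1) := by
      rw [hconjα, hαdef, ← hconj_norm t]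
      field_simp
    linear_combination hq1 + hββ
  -- decomposition of φ
  have hφφ : ⟪φ, φ⟫ = 1 := by
    rw [inner_self_eq_norm_sq_to_K, hφ]; norm_num
  have hφψa : (⟪φ, ψ⟫ : ℂ) = (starRingEnd ℂ) a := by
    rw [hadef, inner_conj_symm]
  set η : EuclideanSpace ℂ (Fin d) := (c : ℂ)⁻¹ • (φ - a • ψ) with hηdef
  have hφdecomp : φ = a • ψ + (c : ℂ) • η := by
    rw [hηdef, smul_smul, mul_inv_cancel₀ hc0, one_smul]
    abel
  have hψη : ⟪ψ, η⟫ = 0 := by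
    rw [hηdef, inner_smul_right, inner_sub_right, inner_smul_right, hψψ, ← hadef]
    ring
  have hcC : ((c : ℝ) : ℂ) ^ 2 = 1 - ((‖a‖ ^ 2 : ℝ) : ℂ) := by
    rw [← Complex.ofReal_pow, hc2]
    push_cast
    ring
  have hηη : ⟪η, η⟫ = 1 := by
    rw [hηdef]
    simp only [inner_smul_left, inner_smul_right, inner_sub_left, inner_sub_right,
      hψψ, hφφ, hφψa, ← hadef, map_inv₀, Complex.conj_ofReal, mul_one]
    have e2 : ((c : ℝ) : ℂ)⁻¹ * (((c : ℝ) : ℂ)⁻¹ * ((c : ℝ) : ℂ) ^ 2) = 1 := by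
      rw [sq]
      field_simp
    linear_combination e2 - ((c:ℝ):ℂ)⁻¹ * ((c:ℝ):ℂ)⁻¹ * hcC
      - ((c:ℝ):ℂ)⁻¹ * ((c:ℝ):ℂ)⁻¹ * (hconj_norm a)
  -- extension helper
  have hext : ∀ x : EuclideanSpace ℂ (Fin d), ⟪ψ, x⟫ = 0 → ⟪x, x⟫ = 1 →
      ∃ B : OrthonormalBasis (Fin d) ℂ (EuclideanSpace ℂ (Fin d)), B i0 = ψ ∧ B i1 = x := by
    intro x hox hxx
    have hxψ : ⟪x, ψ⟫ = 0 := by rw [← inner_conj_symm, hox, map_zero]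
    have hxn : ‖x‖ = 1 := by
      have : ‖x‖ ^ 2 = 1 := by rw [← inner_self_eq_norm_sq (𝕜 := ℂ), hxx]; simp
      exact (pow_eq_one_iff_of_nonneg (norm_nonneg x) two_ne_zero).1 this
    have hon : Orthonormal ℂ (({i0, i1} : Set (Fin d)).restrict
        (fun j => if j = i0 then ψ else x)) := by
      rw [orthonormal_iff_ite]
      rintro ⟨p, hp⟩ ⟨q, hq⟩
      simp only [Set.mem_insert_iff, Set.mem_singleton_iff] at hp hq
      rcases hp with rfl | rfl <;> rcases hq with rfl | rfl <;>
        simp [Subtype.mk.injEq, hne01, hne10, hψψ, hox, hxψ, hxx, hψ, hxn, Set.restrict]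
    obtain ⟨B, hB⟩ := hon.exists_orthonormalBasis_extension_of_card_eq hcard
    refine ⟨B, ?_, ?_⟩
    · have h1 := hB i0 (by simp)
      simpa using h1
    · have h1 := hB i1 (by simp)
      rw [h1, if_neg hne10]
  have hqnorm : ∀ i, ⟪(e.repr.symm (qv i) : EuclideanSpace ℂ (Fin d)),
      e.repr.symm (qv i)⟫ = 1 := by
    intro i
    rw [LinearIsometryEquiv.inner_map_map]
    exact hqq i
  have hψq : ∀ i, ⟪ψ, e.repr.symm (qv i)⟫ = 0 := by
    intro i
    rw [← he]
    have h1 : (⟪e i0, e.repr.symm (qv i)⟫ : ℂ) = ⟪e.repr (e i0), qv i⟫ := by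
      rw [← LinearIsometryEquiv.inner_map_map e.repr, LinearIsometryEquiv.apply_symm_apply]
    rw [h1, OrthonormalBasis.repr_self]
    exact hδq i
  have hBi : ∀ i : Fin d, ∃ B : OrthonormalBasis (Fin d) ℂ (EuclideanSpace ℂ (Fin d)),
      B i0 = ψ ∧ B i1 = e.repr.symm (qv i) :=
    fun i => hext _ (hψq i) (hqnorm i)
  choose B' hB'0 hB'1 using hBi
  obtain ⟨B, hB0, hB1⟩ := hext η hψη hηη
  set U : Fin d → (EuclideanSpace ℂ (Fin d) ≃ₗᵢ[ℂ] EuclideanSpace ℂ (Fin d)) :=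
    fun i => B.repr.trans (B' i).repr.symm with hUdef
  have hUψ : ∀ j, U j ψ = ψ := by
    intro j
    show (B' j).repr.symm (B.repr ψ) = ψ
    have hr : B.repr ψ = EuclideanSpace.single i0 1 := by
      rw [← hB0, OrthonormalBasis.repr_self]
    rw [hr, OrthonormalBasis.repr_symm_single, hB'0]
  have hUη : ∀ j, U j η = e.repr.symm (qv j) := by
    intro j
    show (B' j).repr.symm (B.repr η) = e.repr.symm (qv j)
    have hr : B.repr η = EuclideanSpace.single i1 1 := by
      rw [← hB1, OrthonormalBasis.repr_self]
    rw [hr, OrthonormalBasis.repr_symm_single, hB'1]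
  have hUφ : ∀ i, U i φ = a • ψ + (c : ℂ) • (e.repr.symm (qv i)) := by
    intro i
    calc U i φ = U i (a • ψ + (c : ℂ) • η) := by rw [← hφdecomp]
    _ = a • U i ψ + (c : ℂ) • U i η := by
        rw [map_add, LinearIsometryEquiv.map_smul, LinearIsometryEquiv.map_smul]
    _ = a • ψ + (c : ℂ) • (e.repr.symm (qv i)) := by rw [hUψ, hUη]
  refine ⟨U, b, hUψ, ?_⟩
  intro i
  rw [hUφ i, inner_add_right, inner_smul_right, inner_smul_right]
  have h1 : (⟪b i, ψ⟫ : ℂ) = (sd : ℂ)⁻¹ := by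
    rw [hb i, ← he]
    have h2 : (⟪e.repr.symm (Fv i), e i0⟫ : ℂ) = ⟪Fv i, e.repr (e i0)⟫ := by
      rw [← LinearIsometryEquiv.inner_map_map e.repr, LinearIsometryEquiv.apply_symm_apply]
    rw [h2, OrthonormalBasis.repr_self]
    exact hFδ i
  have h2 : (⟪b i, e.repr.symm (qv i)⟫ : ℂ) = t := by
    rw [hb i, LinearIsometryEquiv.inner_map_map]
    exact hFq i
  rw [h1, h2, htdef]
  field_simp [hc0, hsd0]
  ring

end Construction

/-- The variational distance between two measures: the supremum over measurable sets of the
absolute difference of their (real-valued) measures. -/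
noncomputable def varDist {Λ : Type*} [MeasurableSpace Λ] (μ ν : Measure Λ) : ℝ :=
  ⨆ Ω : {s : Set Λ // MeasurableSet s}, |(μ Ω.1).toReal - (ν Ω.1).toReal|

/-- Hardy's Theorem (concrete form).  Let `d ≥ 3` and let `ψ, φ` be nonorthogonal unit
vectors in `ℂ^d` with `‖⟪φ, ψ⟫‖² ≤ (d−1)/d`, represented by probability measures
`μψ, μφ` on an ontic state space.  Assume that every family of unitaries fixing `ψ` is
represented by Markov kernels satisfying (a) ontic indifference for `ψ` and (b) the model
reproduces the quantum preclusions for measurements in orthonormal bases on the transformed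
states `μφ bind γ j` (representing `U j φ`).  Then `D(μψ, μφ) = 1`: the states `ψ` and `φ`
are ontologically distinct. -/
theorem stmt14 {Λ : Type*} [MeasurableSpace Λ] (d : ℕ) (hd : 3 ≤ d)
    (ψ φ : EuclideanSpace ℂ (Fin d)) (hψ : ‖ψ‖ = 1) (hφ : ‖φ‖ = 1)
    (hne : (inner ℂ φ ψ : ℂ) ≠ 0)
    (hle : ‖(inner ℂ φ ψ : ℂ)‖ ^ 2 ≤ ((d : ℝ) - 1) / d)
    (μψ μφ : Measure Λ) [IsProbabilityMeasure μψ] [IsProbabilityMeasure μφ]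
    (h : ∀ U : Fin d → (EuclideanSpace ℂ (Fin d) ≃ₗᵢ[ℂ] EuclideanSpace ℂ (Fin d)),
      (∀ j, U j ψ = ψ) →
      ∃ γ : Fin d → Kernel Λ Λ, (∀ j, IsMarkovKernel (γ j)) ∧
        (∀ j, ∃ Ω : Set Λ, MeasurableSet Ω ∧ μψ Ω = 1 ∧
          ∀ l ∈ Ω, ∀ Ω' : Set Λ, Ω' ⊆ Ω → MeasurableSet Ω' →
            γ j l Ω' = Measure.dirac l Ω') ∧
        (∀ b : OrthonormalBasis (Fin d) ℂ (EuclideanSpace ℂ (Fin d)),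
          ∃ f : Fin d → Λ → ℝ,
            (∀ i, Measurable (f i)) ∧ (∀ i l, 0 ≤ f i l) ∧ (∀ l, ∑ i, f i l = 1) ∧
            ∀ i j, (inner ℂ (b i) (U j φ) : ℂ) = 0 →
              ∫ x, f i x ∂(μφ.bind fun l => γ j l) = 0)) :
    varDist μψ μφ = 1 := by
  obtain ⟨U, b, hUψ, hprec⟩ := hardy_construction hd ψ φ hψ hφ hle
  obtain ⟨γ, hMk, hOntic, hResp⟩ := h U hUψ
  choose Ωs hΩm hΩψ hΩdirac using hOntic
  obtain ⟨f, hfm, hf0, hfsum, hfprec⟩ := hResp b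
  set Ω : Set Λ := ⋂ j, Ωs j with hΩdef
  have hΩmeas : MeasurableSet Ω := MeasurableSet.iInter fun j => hΩm j
  have hμψΩ : μψ Ω = 1 := by
    rw [← prob_compl_eq_zero_iff hΩmeas, hΩdef, Set.compl_iInter]
    refine measure_iUnion_null fun j => ?_
    rw [prob_compl_eq_zero_iff (hΩm j)]
    exact hΩψ j
  set ν : Fin d → Measure Λ := fun i => μφ.bind fun l => γ i l with hνdef
  have hbind : ∀ (i : Fin d) (S : Set Λ), MeasurableSet S →
      ν i S = ∫⁻ l, γ i l S ∂μφ := by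
    intro i S hS
    exact Measure.bind_apply hS (γ i).measurable.aemeasurable
  have hν1 : ∀ i, IsProbabilityMeasure (ν i) := by
    intro i
    haveI := hMk i
    constructor
    rw [hbind i _ MeasurableSet.univ]
    simp [measure_univ]
  have key : ∀ (i : Fin d) (S : Set Λ), MeasurableSet S → S ⊆ Ω → μφ S ≤ ν i S := by
    intro i S hSm hSΩ
    rw [hbind i S hSm]
    have h1 : ∫⁻ l in Ω, S.indicator 1 l ∂μφ = μφ S := by
      rw [lintegral_indicator hSm]
      simp only [Pi.one_apply]
      rw [setLIntegral_one, Measure.restrict_apply hSm,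
        Set.inter_eq_self_of_subset_left hSΩ]
    have h2 : ∫⁻ l in Ω, S.indicator 1 l ∂μφ = ∫⁻ l in Ω, γ i l S ∂μφ := by
      refine setLIntegral_congr_fun hΩmeas (fun l hl => ?_)
      have hlj : l ∈ Ωs i := by
        rw [hΩdef] at hl
        exact Set.mem_iInter.1 hl i
      rw [hΩdirac i l hlj S (hSΩ.trans (Set.iInter_subset _ i)) hSm,
        Measure.dirac_apply' l hSm]
    rw [← h1, h2]
    exact lintegral_mono' Measure.restrict_le_self le_rfl
  have hle1 : ∀ i l, f i l ≤ 1 := by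
    intro i l
    rw [← hfsum l]
    exact Finset.single_le_sum (fun j _ => hf0 j l) (Finset.mem_univ i)
  have hNull : ∀ i : Fin d, μφ ({l | f i l ≠ 0} ∩ Ω) = 0 := by
    intro i
    haveI := hν1 i
    have hInt : Integrable (f i) (ν i) :=
      Integrable.mono' (integrable_const 1) (hfm i).aestronglyMeasurable
        (Filter.Eventually.of_forall fun l => by
          rw [Real.norm_eq_abs, abs_of_nonneg (hf0 i l)]; exact hle1 i l)
    have hfae : f i =ᵐ[ν i] 0 :=
      (integral_eq_zero_iff_of_nonneg (fun l => hf0 i l) hInt).1 (hfprec i i (hprec i))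
    have hNm : MeasurableSet {l | f i l ≠ 0} := (hfm i) (measurableSet_singleton 0) |>.compl
    have hνN : ν i {l | f i l ≠ 0} = 0 := by
      have := hfae
      rw [Filter.EventuallyEq, ae_iff] at this
      simpa using this
    have h1 : μφ ({l | f i l ≠ 0} ∩ Ω) ≤ ν i ({l | f i l ≠ 0} ∩ Ω) :=
      key i _ (hNm.inter hΩmeas) Set.inter_subset_right
    have h2 : ν i ({l | f i l ≠ 0} ∩ Ω) ≤ ν i {l | f i l ≠ 0} :=
      measure_mono Set.inter_subset_left
    exact le_antisymm (h1.trans (h2.trans_eq hνN)) zero_le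
  have hμφΩ : μφ Ω = 0 := by
    have hcover : Ω ⊆ ⋃ i : Fin d, ({l | f i l ≠ 0} ∩ Ω) := by
      intro l hl
      have : ∑ i, f i l = 1 := hfsum l
      obtain ⟨i, _, hi⟩ := Finset.exists_ne_zero_of_sum_ne_zero (by rw [this]; norm_num)
      exact Set.mem_iUnion.2 ⟨i, hi, hl⟩
    refine le_antisymm ?_ zero_le
    calc μφ Ω ≤ μφ (⋃ i : Fin d, ({l | f i l ≠ 0} ∩ Ω)) := measure_mono hcover
    _ ≤ ∑' i : Fin d, μφ ({l | f i l ≠ 0} ∩ Ω) := measure_iUnion_le _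
    _ = 0 := by simp [hNull]
  -- conclude
  have hub : ∀ s : {s : Set Λ // MeasurableSet s},
      |(μψ s.1).toReal - (μφ s.1).toReal| ≤ 1 := by
    intro s
    have h1 : (μψ s.1).toReal ≤ 1 := by
      have := prob_le_one (μ := μψ) (s := s.1)
      simpa using ENNReal.toReal_mono (by simp) this
    have h2 : (μφ s.1).toReal ≤ 1 := by
      have := prob_le_one (μ := μφ) (s := s.1)
      simpa using ENNReal.toReal_mono (by simp) this
    have h3 : 0 ≤ (μψ s.1).toReal := ENNReal.toReal_nonneg
    have h4 : 0 ≤ (μφ s.1).toReal := ENNReal.toReal_nonneg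
    rw [abs_le]
    constructor <;> linarith
  haveI : Nonempty {s : Set Λ // MeasurableSet s} := ⟨⟨∅, MeasurableSet.empty⟩⟩
  have hge : (1 : ℝ) ≤ varDist μψ μφ := by
    have hval : |(μψ Ω).toReal - (μφ Ω).toReal| = 1 := by
      rw [hμψΩ, hμφΩ]
      norm_num
    have hbdd : BddAbove (Set.range fun s : {s : Set Λ // MeasurableSet s} =>
        |(μψ s.1).toReal - (μφ s.1).toReal|) := by
      refine ⟨1, ?_⟩
      rintro x ⟨s, rfl⟩
      exact hub s
    rw [varDist, ← hval]
    exact le_ciSup hbdd (⟨Ω, hΩmeas⟩ : {s : Set Λ // MeasurableSet s})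
  refine le_antisymm ?_ hge
  rw [varDist]
  exact ciSup_le hub
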